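/- Let T be a bounded linear operator on a Banach space B and suppose there exists a compact operator S on B with dense range such that TS = ST. If there exists x ∈ B such that the set {λ T^n x : λ ∈ ℂ, n ∈ ℕ₀} is weakly sequentially dense in B, then T is supercyclic; in fact Sx is a supercyclic vector for T, i.e., {λ T^n (Sx) : λ ∈ ℂ, n ∈ ℕ₀} is norm-dense in B. -/

import Mathlib

open Filter Topology NormedSpace Set

/-- A compact operator maps weakly convergent sequences to norm convergent sequences. -/
lemma compact_tendsto_of_weak_tendsto {B : Type*} [NormedAddCommGroup B] [NormedSpace ℂ B]
    (S : B →L[ℂ] B) (hS : IsCompactOperator (⇑S)) {w : ℕ → B} {q : B}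
    (hw : ∀ f : B →L[ℂ] ℂ, Tendsto (fun n => f (w n)) atTop (𝓝 (f q))) :
    Tendsto (fun n => S (w n)) atTop (𝓝 (S q)) := by
  -- the sequence is norm-bounded, by Banach–Steinhaus
  obtain ⟨C, hC⟩ : ∃ C, ∀ n, ‖w n‖ ≤ C := by
    obtain ⟨C, hC⟩ := banach_steinhaus
      (g := fun n => NormedSpace.inclusionInDoubleDual ℂ B (w n)) (fun f => by
        obtain ⟨c, hc⟩ := ((hw f).norm).bddAbove_range
        exact ⟨c, fun n => hc ⟨n, rfl⟩⟩)
    refine ⟨C, fun n => ?_⟩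
    have := (NormedSpace.inclusionInDoubleDualLi ℂ (E := B)).norm_map (w n)
    rw [← this]
    exact hC n
  -- the image lies in a compact set
  obtain ⟨K, hK, hKsub⟩ :=
    IsCompactOperator.image_subset_compact_of_bounded (f := (S : B →ₗ[ℂ] B)) hS
      (Metric.isBounded_closedBall (x := (0 : B)) (r := C))
  have hmem : ∀ n, S (w n) ∈ K := fun n =>
    hKsub ⟨w n, by simpa [Metric.mem_closedBall, dist_eq_norm] using hC n, rfl⟩
  -- subsequence argument
  refine tendsto_of_subseq_tendsto fun ns hns => ?_
  obtain ⟨y, -, ψ, hψ, hy⟩ := hK.tendsto_subseq (x := fun n => S (w (ns n))) (fun n => hmem _)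
  refine ⟨ψ, ?_⟩
  have hyq : y = S q := by
    rw [NormedSpace.eq_iff_forall_dual_eq ℂ]
    intro g
    have h1 : Tendsto (fun n => g (S (w (ns (ψ n))))) atTop (𝓝 (g y)) :=
      (g.continuous.tendsto y).comp hy
    have h2 : Tendsto (fun n => g (S (w (ns (ψ n))))) atTop (𝓝 (g (S q))) := by
      have := hw (g ∘L S)
      exact (this.comp (hns.comp hψ.tendsto_atTop))
    exact tendsto_nhds_unique h1 h2
  rw [← hyq]
  exact hy

/-- Proposition 6.1 (supercyclicity part): let `T` be a bounded operator on a Banach space `B`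
commuting with a compact operator `S` with dense range. If the projective orbit
`{λ • T^n x}` of some `x` is weakly sequentially dense in `B`, then `S x` is a supercyclic
vector for `T`: its projective orbit is norm dense. -/
theorem supercyclic_of_weaklySeqDense_projOrbit
    {B : Type*} [NormedAddCommGroup B] [NormedSpace ℂ B] [CompleteSpace B]
    (T S : B →L[ℂ] B) (hS : IsCompactOperator (⇑S)) (hSr : DenseRange (⇑S))
    (hcomm : T ∘L S = S ∘L T) (x : B)
    (hx : ∀ C : Set (WeakSpace ℂ B), IsSeqClosed C →
      {v : WeakSpace ℂ B | ∃ (lam : ℂ) (n : ℕ), v = toWeakSpace ℂ B (lam • (T ^ n) x)} ⊆ C →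
      C = Set.univ) :
    Dense {v : B | ∃ (lam : ℂ) (n : ℕ), v = lam • (T ^ n) (S x)} := by
  set O : Set B := {v : B | ∃ (lam : ℂ) (n : ℕ), v = lam • (T ^ n) (S x)} with hO
  rw [dense_iff_closure_eq]
  set D := closure O with hD
  -- commutation of powers
  have hTS : ∀ y, T (S y) = S (T y) := fun y => DFunLike.congr_fun hcomm y
  have hST : ∀ (n : ℕ) (y : B), (T ^ n) (S y) = S ((T ^ n) y) := by
    intro n
    induction n with
    | zero => intro y; simp
    | succ n ih =>
      intro y
      show (T ^ n) (T (S y)) = S ((T ^ n) (T y))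
      rw [hTS y, ih (T y)]
  -- the key set
  set C : Set (WeakSpace ℂ B) := {v | S ((toWeakSpace ℂ B).symm v) ∈ D} with hCdef
  have hCseq : IsSeqClosed C := by
    intro u p hu hup
    set w : ℕ → B := fun n => (toWeakSpace ℂ B).symm (u n) with hwdef
    set q : B := (toWeakSpace ℂ B).symm p with hqdef
    have hweak : ∀ f : B →L[ℂ] ℂ, Tendsto (fun n => f (w n)) atTop (𝓝 (f q)) := by
      intro f
      have hcont : Continuous fun v : WeakSpace ℂ B =>
          ((topDualPairing ℂ B).flip v) f := WeakBilin.eval_continuous _ f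
      exact (hcont.tendsto p).comp hup
    have := compact_tendsto_of_weak_tendsto S hS hweak
    exact isClosed_closure.mem_of_tendsto this (Eventually.of_forall fun n => hu n)
  have hCsub : {v : WeakSpace ℂ B |
      ∃ (lam : ℂ) (n : ℕ), v = toWeakSpace ℂ B (lam • (T ^ n) x)} ⊆ C := by
    rintro v ⟨lam, n, rfl⟩
    show S ((toWeakSpace ℂ B).symm (toWeakSpace ℂ B (lam • (T ^ n) x))) ∈ D
    rw [LinearEquiv.symm_apply_apply]
    refine subset_closure ⟨lam, n, ?_⟩
    rw [map_smul, hST n x]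
  have hCuniv := hx C hCseq hCsub
  have hrange : Set.range (⇑S) ⊆ D := by
    rintro - ⟨b, rfl⟩
    have : toWeakSpace ℂ B b ∈ C := hCuniv ▸ Set.mem_univ _
    simpa [hCdef] using this
  have : closure (Set.range (⇑S)) ⊆ D := closure_minimal hrange isClosed_closure
  rw [denseRange_iff_closure_range.mp hSr] at this
  exact Set.eq_univ_of_univ_subset this
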